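/- For n ≥ 2, λ ∈ ℂ with λ ≠ 0, and 1 ≤ l ≤ n−1, the matrix (J_{n,λ}⁻¹ − (1/λ)·I_n)^l equals ((−1)^l / λ^{2l})·M_n^l plus a ℂ-linear combination of the higher powers M_n^{l+1}, …, M_n^{n−1}; that is, there exist coefficients c_{l+1}, …, c_{n−1} ∈ ℂ with (J_{n,λ}⁻¹ − (1/λ)·I_n)^l = ((−1)^l / λ^{2l})·M_n^l + Σ_{j=l+1}^{n−1} c_j·M_n^j. -/

import Mathlib

open Matrix

/-- The `n × n` nilpotent Jordan block over `ℂ`: `1`s on the superdiagonal, `0` elsewhere. -/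
def Mblock (n : ℕ) : Matrix (Fin n) (Fin n) ℂ :=
  Matrix.of fun i j => if (j : ℕ) = (i : ℕ) + 1 then 1 else 0

/-- The Jordan cell `J_{n,λ} = λ·I_n + M_n`. -/
def Jcell (n : ℕ) (lam : ℂ) : Matrix (Fin n) (Fin n) ℂ :=
  lam • (1 : Matrix (Fin n) (Fin n) ℂ) + Mblock n

lemma Mblock_pow_apply (n k : ℕ) (i j : Fin n) :
    (Mblock n ^ k) i j = if (j : ℕ) = (i : ℕ) + k then 1 else 0 := by
  induction k generalizing i j with
  | zero => simp [Matrix.one_apply, Fin.ext_iff, eq_comm]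
  | succ k ih =>
    rw [pow_succ, Matrix.mul_apply]
    have hMe : ∀ x y : Fin n, Mblock n x y = if (y : ℕ) = (x : ℕ) + 1 then 1 else 0 :=
      fun x y => rfl
    simp only [ih, hMe, ite_mul, one_mul, zero_mul]
    by_cases h : (i : ℕ) + k < n
    · rw [Finset.sum_eq_single (⟨(i : ℕ) + k, h⟩ : Fin n)]
      · simp [add_assoc]
      · intro x _ hx
        rw [if_neg (fun h' => hx (Fin.ext h'))]
      · intro hx
        exact absurd (Finset.mem_univ _) hx
    · have hz : ∀ x : Fin n, x ∈ Finset.univ →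
          (if (x : ℕ) = (i : ℕ) + k then
            (if (j : ℕ) = (x : ℕ) + 1 then (1 : ℂ) else 0) else 0) = 0 := by
        intro x _
        rw [if_neg]
        omega
      rw [Finset.sum_eq_zero hz, if_neg]
      omega

lemma Mblock_pow_eq_zero (n k : ℕ) (hk : n ≤ k) : Mblock n ^ k = 0 := by
  ext i j
  rw [Mblock_pow_apply, if_neg]
  · rfl
  · omega

lemma aeval_trunc (n : ℕ) {M : Matrix (Fin n) (Fin n) ℂ} (hM : M ^ n = 0) (r : Polynomial ℂ) :
    Polynomial.aeval M r = ∑ j ∈ Finset.range n, r.coeff j • M ^ j := by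
  have hK : r.natDegree < max n (r.natDegree + 1) := lt_of_lt_of_le (Nat.lt_succ_self _)
    (le_max_right _ _)
  rw [Polynomial.aeval_eq_sum_range' hK M]
  symm
  apply Finset.sum_subset (Finset.range_subset_range.2 (le_max_left _ _))
  intro j hj hnj
  have hnj' : n ≤ j := by simpa using hnj
  have hj0 : M ^ j = 0 := by
    rw [← Nat.add_sub_cancel' hnj', pow_add, hM, zero_mul]
  rw [hj0, smul_zero]

lemma Jcell_inv_eq (n : ℕ) (lam : ℂ) (hlam : lam ≠ 0) :
    (Jcell n lam)⁻¹ =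
      ∑ k ∈ Finset.range n, ((-1 : ℂ) ^ k * lam⁻¹ ^ (k + 1)) • Mblock n ^ k := by
  rcases Nat.eq_zero_or_pos n with rfl | hn
  · apply Matrix.ext
    intro i
    exact i.elim0
  obtain ⟨m, rfl⟩ : ∃ m, n = m + 1 := ⟨n - 1, by omega⟩
  apply Matrix.inv_eq_right_inv
  rw [Jcell, add_mul, Matrix.smul_mul, one_mul, Finset.mul_sum, Finset.smul_sum]
  simp only [smul_smul, Matrix.mul_smul, ← pow_succ']
  rw [Finset.sum_range_succ', Finset.sum_range_succ,
    Mblock_pow_eq_zero (m + 1) (m + 1) le_rfl, smul_zero, add_zero]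
  have h1 : ∀ k ∈ Finset.range m,
      (lam * ((-1 : ℂ) ^ (k + 1) * lam⁻¹ ^ (k + 1 + 1))) • Mblock (m + 1) ^ (k + 1)
        = -(((-1 : ℂ) ^ k * lam⁻¹ ^ (k + 1)) • Mblock (m + 1) ^ (k + 1)) := by
    intro k _
    rw [← neg_smul]
    congr 1
    rw [pow_succ (-1 : ℂ), pow_succ lam⁻¹ (k + 1)]
    field_simp
  rw [Finset.sum_congr rfl h1]
  have h0 : lam * ((-1 : ℂ) ^ 0 * lam⁻¹ ^ (0 + 1)) = 1 := by
    field_simp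
    simp [hlam]
  rw [h0, pow_zero, one_smul, Finset.sum_neg_distrib]
  abel

theorem Jcell_inv_sub_pow (n : ℕ) (hn : 2 ≤ n) (lam : ℂ) (hlam : lam ≠ 0)
    (l : ℕ) (hl1 : 1 ≤ l) (hl2 : l ≤ n - 1) :
    ∃ c : ℕ → ℂ,
      ((Jcell n lam)⁻¹ - lam⁻¹ • (1 : Matrix (Fin n) (Fin n) ℂ)) ^ l =
        ((-1 : ℂ) ^ l / lam ^ (2 * l)) • (Mblock n) ^ l +
          ∑ j ∈ Finset.Ico (l + 1) n, c j • (Mblock n) ^ j := by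
  have hM : Mblock n ^ n = 0 := Mblock_pow_eq_zero n n le_rfl
  set a : ℕ → ℂ := fun k => (-1 : ℂ) ^ k * lam⁻¹ ^ (k + 1) with ha
  set q : Polynomial ℂ := ∑ k ∈ Finset.Ico 1 n, Polynomial.C (a k) * Polynomial.X ^ (k - 1)
    with hq
  have hB : (Jcell n lam)⁻¹ - lam⁻¹ • (1 : Matrix (Fin n) (Fin n) ℂ)
      = Polynomial.aeval (Mblock n) (Polynomial.X * q) := by
    rw [_root_.map_mul, Polynomial.aeval_X, hq, _root_.map_sum]
    have h2 : ∀ k ∈ Finset.Ico 1 n,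
        Polynomial.aeval (Mblock n) (Polynomial.C (a k) * Polynomial.X ^ (k - 1))
          = a k • Mblock n ^ (k - 1) := by
      intro k _
      rw [_root_.map_mul, Polynomial.aeval_C, _root_.map_pow, Polynomial.aeval_X,
        Algebra.smul_def]
    rw [Finset.sum_congr rfl h2, Finset.mul_sum]
    simp only [Matrix.mul_smul, ← pow_succ']
    have h3 : ∀ k ∈ Finset.Ico 1 n,
        a k • Mblock n ^ (k - 1 + 1) = a k • Mblock n ^ k := by
      intro k hk
      rw [Nat.sub_add_cancel (Finset.mem_Ico.1 hk).1]
    rw [Finset.sum_congr rfl h3]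
    rw [Jcell_inv_eq n lam hlam, Finset.range_eq_Ico,
      Finset.sum_eq_sum_Ico_succ_bot (by omega : 0 < n)]
    simp only [ha, pow_zero, one_mul, zero_add, pow_one]
    rw [add_sub_cancel_left]
  have hco : ∀ j, ((Polynomial.X * q) ^ l).coeff j
      = if l ≤ j then (q ^ l).coeff (j - l) else 0 := by
    intro j
    rw [mul_pow, Polynomial.coeff_X_pow_mul']
  have hq0 : q.coeff 0 = a 1 := by
    rw [hq, Polynomial.finset_sum_coeff]
    rw [Finset.sum_eq_single 1]
    · simp
    · intro k hk hk1
      have hk' : 1 ≤ k := (Finset.mem_Ico.1 hk).1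
      have : k - 1 ≠ 0 := by omega
      simp [Polynomial.coeff_C_mul, Polynomial.coeff_X_pow, Ne.symm this]
    · intro h
      exact absurd (Finset.mem_Ico.2 ⟨le_rfl, by omega⟩) h
  have hql : (q ^ l).coeff 0 = (a 1) ^ l := by
    rw [← Polynomial.constantCoeff_apply, map_pow, Polynomial.constantCoeff_apply, hq0]
  refine ⟨fun j => ((Polynomial.X * q) ^ l).coeff j, ?_⟩
  rw [hB, ← _root_.map_pow, aeval_trunc n hM]
  have hln : l + 1 ≤ n := by omega
  rw [← Finset.sum_range_add_sum_Ico _ hln, Finset.sum_range_succ]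
  have hzero : ∑ j ∈ Finset.range l, ((Polynomial.X * q) ^ l).coeff j • Mblock n ^ j = 0 := by
    apply Finset.sum_eq_zero
    intro j hj
    rw [hco, if_neg (by simpa using (Finset.mem_range.1 hj).not_ge), zero_smul]
  rw [hzero, zero_add]
  congr 1
  rw [hco, if_pos le_rfl, Nat.sub_self, hql]
  congr 1
  simp only [ha, pow_one]
  rw [show (1 : ℕ) + 1 = 2 from rfl, mul_pow, ← pow_mul, inv_pow, ← div_eq_mul_inv]
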